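/- Let I ⊆ ℝ be an open interval with 0 ∉ I, let α, β ∈ ℂ, let c ∈ ℂ with c ≠ 0, and let q̄, r̄ : I → ℂ be C² functions with q̄ nonvanishing, satisfying on I: q̄″ = (4c/t)·q̄ − ((2α+1)/t)·q̄′ + (q̄′)²·r̄′, r̄″ = (4c/t)·r̄ + (2α/t)·r̄′ − q̄′·(r̄′)², and 4q̄r̄ = 2(β − α)/c + (t/c)·q̄′·r̄′. Define y := t·q̄′/q̄ and z := q̄·r̄′/2. Then y and z are differentiable on I and satisfy t·y′ = 2y²z − y² − 2αy + 4ct and t·z′ = −2yz² + 2yz + 2αz + β − α. -/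

import Mathlib

theorem PIII_from_similarity_ODE
    (I : Set ℝ) (hI : IsOpen I) (hI0 : (0 : ℝ) ∉ I)
    (α β c : ℂ) (hc : c ≠ 0)
    (qb rb : ℝ → ℂ)
    (hqb : ContDiffOn ℝ 2 qb I) (hrb : ContDiffOn ℝ 2 rb I)
    (hqb0 : ∀ t ∈ I, qb t ≠ 0)
    (heq1 : ∀ t ∈ I, deriv (deriv qb) t
      = (4 * c / (t : ℂ)) * qb t - ((2 * α + 1) / (t : ℂ)) * deriv qb t
        + (deriv qb t) ^ 2 * deriv rb t)
    (heq2 : ∀ t ∈ I, deriv (deriv rb) t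
      = (4 * c / (t : ℂ)) * rb t + (2 * α / (t : ℂ)) * deriv rb t
        - deriv qb t * (deriv rb t) ^ 2)
    (heq3 : ∀ t ∈ I, 4 * qb t * rb t
      = 2 * (β - α) / c + ((t : ℂ) / c) * deriv qb t * deriv rb t)
    (y z : ℝ → ℂ)
    (hy : y = fun (t : ℝ) => (t : ℂ) * deriv qb t / qb t)
    (hz : z = fun (t : ℝ) => qb t * deriv rb t / 2) :
    DifferentiableOn ℝ y I ∧ DifferentiableOn ℝ z I ∧
    ∀ t ∈ I,
      (t : ℂ) * deriv y t
        = 2 * (y t) ^ 2 * z t - (y t) ^ 2 - 2 * α * y t + 4 * c * (t : ℂ) ∧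
      (t : ℂ) * deriv z t
        = -2 * y t * (z t) ^ 2 + 2 * y t * z t + 2 * α * z t + β - α := by
  have h12 : (1 : WithTop ℕ∞) + 1 ≤ 2 := by norm_num
  have hqd : DifferentiableOn ℝ qb I := hqb.differentiableOn two_ne_zero
  have hrd : DifferentiableOn ℝ rb I := hrb.differentiableOn two_ne_zero
  have hqd' : DifferentiableOn ℝ (deriv qb) I :=
    (hqb.deriv_of_isOpen hI h12).differentiableOn one_ne_zero
  have hrd' : DifferentiableOn ℝ (deriv rb) I :=
    (hrb.deriv_of_isOpen hI h12).differentiableOn one_ne_zero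
  have hod : DifferentiableOn ℝ (fun s : ℝ => (s : ℂ)) I :=
    fun s _ => (Complex.ofRealCLM.differentiable s).differentiableWithinAt
  have hYd : DifferentiableOn ℝ y I := by
    rw [hy]; exact (hod.mul hqd').div hqd hqb0
  have hZd : DifferentiableOn ℝ z I := by
    rw [hz]; exact (hqd.mul hrd').div_const 2
  refine ⟨hYd, hZd, fun t ht => ?_⟩
  have hmem := hI.mem_nhds ht
  have htn : (t : ℂ) ≠ 0 := by
    simp only [ne_eq, Complex.ofReal_eq_zero]
    rintro rfl; exact hI0 ht
  have hq0 := hqb0 t ht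
  have hq : HasDerivAt qb (deriv qb t) t :=
    ((hqd t ht).differentiableAt hmem).hasDerivAt
  have hr : HasDerivAt rb (deriv rb t) t :=
    ((hrd t ht).differentiableAt hmem).hasDerivAt
  have hq' : HasDerivAt (deriv qb) (deriv (deriv qb) t) t :=
    ((hqd' t ht).differentiableAt hmem).hasDerivAt
  have hr' : HasDerivAt (deriv rb) (deriv (deriv rb) t) t :=
    ((hrd' t ht).differentiableAt hmem).hasDerivAt
  have hT : HasDerivAt (fun s : ℝ => (s : ℂ)) 1 t := by
    simpa using (hasDerivAt_id t).ofReal_comp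
  have hY : HasDerivAt y
      (((1 * deriv qb t + (t : ℂ) * deriv (deriv qb) t) * qb t
        - (t : ℂ) * deriv qb t * deriv qb t) / qb t ^ 2) t := by
    rw [hy]; exact (hT.mul hq').div hq hq0
  have hZ : HasDerivAt z
      ((deriv qb t * deriv rb t + qb t * deriv (deriv rb) t) / 2) t := by
    rw [hz]; exact (hq.mul hr').div_const 2
  have hYdv := hY.deriv
  have hZdv := hZ.deriv
  have h1 := heq1 t ht
  have h2 := heq2 t ht
  have h3 := heq3 t ht
  have h3' : c * (4 * qb t * rb t) = 2 * (β - α) + (t : ℂ) * deriv qb t * deriv rb t := by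
    rw [h3]; field_simp
  have hrbt : rb t = (2 * (β - α) + (t : ℂ) * deriv qb t * deriv rb t) / (4 * c * qb t) := by
    rw [eq_div_iff (by simp [hc, hq0])]
    linear_combination h3'
  have h1' : (t : ℂ) * deriv (deriv qb) t
      = 4 * c * qb t - (2 * α + 1) * deriv qb t
        + (t : ℂ) * (deriv qb t) ^ 2 * deriv rb t := by
    rw [h1]; field_simp
  have h2' : (t : ℂ) * deriv (deriv rb) t
      = 4 * c * rb t + 2 * α * deriv rb t
        - (t : ℂ) * deriv qb t * (deriv rb t) ^ 2 := by
    rw [h2]; field_simp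
  constructor
  · rw [hYdv, hy, hz]
    field_simp [hq0]
    linear_combination (qb t) * h1'
  · rw [hZdv, hy, hz]
    field_simp [hq0]
    linear_combination (qb t) * h2' + h3'
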